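/- Soundness of the specification for n-queens solutions: suppose cs is an open list of length exactly n > 0 whose ground members are exactly 1,…,n, such that the up diagonal numbers kₐ + jₐ and the down diagonal numbers kₐ − jₐ (where queen jₐ is the kₐ-th member) are each pairwise distinct. Then any ground instance of cs that is a list of length n is a permutation of [1,…,n] in which no two entries share a row, column, up diagonal, or down diagonal, i.e., for all a ≠ b: jₐ ≠ j_b, kₐ ≠ k_b, kₐ + jₐ ≠ k_b + j_b, and kₐ − jₐ ≠ k_b − j_b — a solution to the n-queens problem. -/

import Mathlib

/-- Terms: variables, number constants, and list constructors. -/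
inductive Tm : Type
  | var : ℕ → Tm
  | const : ℕ → Tm
  | nil : Tm
  | cons : Tm → Tm → Tm
deriving DecidableEq

/-- The set of variables of a term. -/
def Tm.vars : Tm → Finset ℕ
  | .var x => {x}
  | .const _ => ∅
  | .nil => ∅
  | .cons s t => s.vars ∪ t.vars

/-- A term is ground if it has no variables. -/
def Tm.Ground (t : Tm) : Prop := t.vars = ∅

/-- Boolean groundness test. -/
def Tm.groundB : Tm → Bool
  | .var _ => false
  | .const _ => true
  | .nil => true
  | .cons s t => s.groundB && t.groundB

/-- Applying a substitution to a term. -/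
def Tm.subst (σ : ℕ → Tm) : Tm → Tm
  | .var x => σ x
  | .const c => .const c
  | .nil => .nil
  | .cons s t => .cons (s.subst σ) (t.subst σ)

/-- The open list `[t₁,…,tₙ|v]` with members `ts` and open-list variable `v`. -/
def mkOpen (ts : List Tm) (v : ℕ) : Tm := ts.foldr .cons (.var v)

/-- The (closed) list `[t₁,…,tₙ]` with members `ts`. -/
def mkList (ts : List Tm) : Tm := ts.foldr .cons .nil

/-- `(ts, v)` describes a g.v.d. (a linear open list with pairwise distinct
    members, each member ground or a variable). -/
def IsGVD (ts : List Tm) (v : ℕ) : Prop :=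
  (∀ t ∈ ts, t.Ground ∨ ∃ x, t = .var x) ∧
  ts.Nodup ∧
  (ts.map Tm.vars).Pairwise Disjoint ∧
  ∀ t ∈ ts, v ∉ t.vars

/-- `θ` unifies `s` and `t`. -/
def IsUnifier (s t : Tm) (θ : ℕ → Tm) : Prop := s.subst θ = t.subst θ

/-- `θ` is a most general unifier of `s` and `t`. -/
def IsMGU (s t : Tm) (θ : ℕ → Tm) : Prop :=
  IsUnifier s t θ ∧ ∀ σ, IsUnifier s t σ → ∃ δ, ∀ x, σ x = (θ x).subst δ

/-- `s` is the `k`-th member (1-based) of the term `t`,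
    i.e. `t = [t₁,…,t_{k-1},s|t₀]`. -/
inductive KthMem : Tm → ℕ → Tm → Prop
  | head (s t : Tm) : KthMem (.cons s t) 1 s
  | tail {t : Tm} {k : ℕ} {s : Tm} (a : Tm) : KthMem t k s → KthMem (.cons a t) (k + 1) s

/-- The open list `cs` represents a correct placement up to row `m`:
    it is a g.v.d., its ground members are exactly the queens `1,…,m`
    (represented as `const j`), and their up diagonal numbers `k + j - i`
    and down diagonal numbers `k + i - j` (w.r.t. any reference row `i`;
    distinctness does not depend on `i`) are respectively pairwise
    distinct. -/
def CorrectUpTo (cs : Tm) (m : ℕ) : Prop :=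
  (∃ ts v, cs = mkOpen ts v ∧ IsGVD ts v) ∧
  (∀ j : ℕ, 1 ≤ j → j ≤ m → ∃ k, KthMem cs k (.const j)) ∧
  (∀ k : ℕ, ∀ s : Tm, KthMem cs k s → s.Ground →
      ∃ j : ℕ, 1 ≤ j ∧ j ≤ m ∧ s = .const j) ∧
  (∀ j j' k k' : ℕ, KthMem cs k (.const j) → KthMem cs k' (.const j') →
      j ≠ j' → k + j ≠ k' + j' ∧ (k : ℤ) - j ≠ (k' : ℤ) - j')

/-- The pair `(us, ds)` is correct up to `m` w.r.t. the row `i` and `cs`: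
    each queen `j ∈ {1,…,m}` is a member of `cs`, and whenever its up
    (resp. down) diagonal number `l` in `cs` w.r.t. `i` is positive, the
    `l`-th member of `us` (resp. `ds`) is `j`. -/
def PairCorrect (us ds : Tm) (m i : ℕ) (cs : Tm) : Prop :=
  ∀ j : ℕ, 1 ≤ j → j ≤ m →
    (∃ k, KthMem cs k (.const j)) ∧
    ∀ k : ℕ, KthMem cs k (.const j) →
      (∀ l : ℕ, (l : ℤ) = (k : ℤ) + j - i → 0 < l → KthMem us l (.const j)) ∧
      (∀ l : ℕ, (l : ℤ) = (k : ℤ) + i - j → 0 < l → KthMem ds l (.const j))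

lemma kthmem_mkOpen {ts : List Tm} {v : ℕ} {k : ℕ} {s : Tm} :
    KthMem (mkOpen ts v) k s ↔ ∃ i, i < ts.length ∧ k = i + 1 ∧ ts.getD i .nil = s := by
  induction ts generalizing k with
  | nil =>
    simp only [mkOpen, List.foldr_nil, List.length_nil]
    constructor
    · intro h; cases h
    · rintro ⟨i, hi, -⟩; omega
  | cons a ts ih =>
    constructor
    · intro h
      cases h with
      | head => exact ⟨0, by simp⟩
      | tail _ h' =>
        obtain ⟨i, hi, hk, hg⟩ := ih.1 h'
        exact ⟨i + 1, by simpa using hi, by omega, by simpa using hg⟩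
    · rintro ⟨i, hi, rfl, hg⟩
      cases i with
      | zero => simp at hg; rw [← hg]; exact KthMem.head _ _
      | succ i =>
        exact KthMem.tail _ (ih.2 ⟨i, by simpa using hi, rfl, by simpa using hg⟩)

lemma subst_mkOpen (ts : List Tm) (v : ℕ) (θ : ℕ → Tm) :
    (mkOpen ts v).subst θ = (ts.map (Tm.subst θ)).foldr .cons (θ v) := by
  induction ts with
  | nil => rfl
  | cons a ts ih => simpa [mkOpen, Tm.subst] using ih

lemma foldr_cons_inj : ∀ (l1 l2 : List Tm) (t1 t2 : Tm),
    l1.length = l2.length → l1.foldr .cons t1 = l2.foldr .cons t2 → l1 = l2 ∧ t1 = t2 := by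
  intro l1
  induction l1 with
  | nil => intro l2 t1 t2 hl h; cases l2 with
    | nil => exact ⟨rfl, h⟩
    | cons b l2 => simp at hl
  | cons a l1 ih =>
    intro l2 t1 t2 hl h
    cases l2 with
    | nil => simp at hl
    | cons b l2 =>
      simp only [List.foldr_cons, Tm.cons.injEq] at h
      obtain ⟨h1, h2⟩ := h
      obtain ⟨h3, h4⟩ := ih l2 t1 t2 (by simpa using hl) h2
      exact ⟨by rw [h1, h3], h4⟩

/-- Extract the number of a constant term. -/
def Tm.num : Tm → ℕ
  | .const c => c
  | _ => 0

@[simp] lemma Tm.num_const (c : ℕ) : (Tm.const c).num = c := rfl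

/-- soundness of the specification: if `cs` is an open list of
    length exactly `n > 0` which is correct up to `n` (ground members exactly
    `1,…,n` with pairwise distinct up and down diagonal numbers), then any
    ground instance of `cs` that is a list of length `n` is a permutation
    `q` of `[1,…,n]` such that no two queens share a row, column, or
    diagonal: for columns `a ≠ b` (0-based here, so column numbers are
    `a+1`, `b+1`), the rows, up diagonal numbers and down diagonal numbers
    differ — a solution to the `n` queens problem. -/
theorem spec_sound_nqueens (ts : List Tm) (v : ℕ) (n : ℕ) (hn : 0 < n)
    (hlen : ts.length = n) (hc : CorrectUpTo (mkOpen ts v) n)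
    (θ : ℕ → Tm) (us : List Tm) (hinst : (mkOpen ts v).subst θ = mkList us)
    (huslen : us.length = n) (hground : (mkList us).Ground) :
    ∃ q : List ℕ, us = q.map Tm.const ∧ q.Perm (List.range' 1 n) ∧
      ∀ a b : ℕ, a < n → b < n → a ≠ b →
        q.getD a 0 ≠ q.getD b 0 ∧
        (a + 1) + q.getD a 0 ≠ (b + 1) + q.getD b 0 ∧
        ((a : ℤ) + 1) - q.getD a 0 ≠ ((b : ℤ) + 1) - q.getD b 0 := by
  obtain ⟨-, h2, h3, h4⟩ := hc
  -- `us` is the substitution instance of `ts`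
  have hmap : ts.map (Tm.subst θ) = us := by
    have h := hinst
    rw [subst_mkOpen] at h
    exact (foldr_cons_inj _ _ _ _ (by simp [hlen, huslen]) h).1
  -- each queen `j+1` sits at some index of `ts`
  have hk : ∀ j : Fin n, ∃ i, i < ts.length ∧ ts.getD i .nil = Tm.const ((j : ℕ) + 1) := by
    intro j
    obtain ⟨k, hkm⟩ := h2 ((j : ℕ) + 1) (by omega) (by omega)
    obtain ⟨i, hi, -, hget⟩ := kthmem_mkOpen.1 hkm
    exact ⟨i, hi, hget⟩
  choose idx hidx hval using hk
  have hidx' : ∀ j : Fin n, idx j < n := fun j => hlen ▸ hidx j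
  set f : Fin n → Fin n := fun j => ⟨idx j, hidx' j⟩ with hf
  have hfinj : Function.Injective f := by
    intro j j' h
    have hh : idx j = idx j' := congrArg Fin.val h
    have : Tm.const ((j : ℕ) + 1) = Tm.const ((j' : ℕ) + 1) := by
      rw [← hval j, ← hval j', hh]
    have := Tm.const.inj this
    exact Fin.ext (by omega)
  have hfsurj : Function.Surjective f := Finite.surjective_of_injective hfinj
  -- every index of `ts` holds a constant
  have hconst : ∀ i : ℕ, i < n → ∃ j : Fin n, idx j = i ∧
      ts.getD i .nil = Tm.const ((j : ℕ) + 1) := by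
    intro i hi
    obtain ⟨j, hj⟩ := hfsurj ⟨i, hi⟩
    have hji : idx j = i := congrArg Fin.val hj
    exact ⟨j, hji, hji ▸ hval j⟩
  refine ⟨ts.map Tm.num, ?_, ?_, ?_⟩
  · -- us = (ts.map Tm.num).map Tm.const
    rw [← hmap]
    apply List.ext_getElem (by simp)
    intro i hi1 hi2
    have hi : i < n := by simpa [hlen] using (by simpa using hi1 : i < ts.length)
    obtain ⟨j, -, hj⟩ := hconst i hi
    have hts : i < ts.length := by omega
    have hgd : ts.getD i .nil = ts[i] := List.getD_eq_getElem ts .nil hts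
    rw [hgd] at hj
    simp only [List.getElem_map, hj, Tm.subst, Tm.num]
  · -- permutation of range' 1 n
    have hqget : ∀ i (hi : i < n), (ts.map Tm.num).getD i 0 = Tm.num (ts.getD i .nil) := by
      intro i hi
      have hts : i < ts.length := by omega
      rw [List.getD_eq_getElem _ _ (by simpa using hts), List.getD_eq_getElem _ _ hts]
      simp
    have hnodup : (ts.map Tm.num).Nodup := by
      rw [List.nodup_iff_injective_get]
      intro ⟨i, hi⟩ ⟨i', hi'⟩ hee
      have hin : i < n := by simpa [hlen] using (by simpa using hi : i < ts.length)
      have hin' : i' < n := by simpa [hlen] using (by simpa using hi' : i' < ts.length)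
      obtain ⟨j, hji, hj⟩ := hconst i hin
      obtain ⟨j', hji', hj'⟩ := hconst i' hin'
      have h1 : (ts.map Tm.num).get ⟨i, hi⟩ = (j : ℕ) + 1 := by
        simp only [List.get_eq_getElem, List.getElem_map]
        rw [← List.getD_eq_getElem ts .nil, hj]; rfl
      have h2' : (ts.map Tm.num).get ⟨i', hi'⟩ = (j' : ℕ) + 1 := by
        simp only [List.get_eq_getElem, List.getElem_map]
        rw [← List.getD_eq_getElem ts .nil, hj']; rfl
      rw [h1, h2'] at hee
      have : j = j' := Fin.ext (by omega)
      subst this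
      refine Fin.ext ?_
      show i = i'
      omega
    apply List.perm_of_nodup_nodup_toFinset_eq hnodup (List.nodup_range' (s := 1) (n := n))
    ext x
    simp only [List.mem_toFinset, List.mem_range'_1, List.mem_map]
    constructor
    · rintro ⟨t, ht, rfl⟩
      obtain ⟨i, hi, rfl⟩ := List.mem_iff_getElem.1 ht
      have hin : i < n := by omega
      obtain ⟨j, -, hj⟩ := hconst i hin
      rw [← List.getD_eq_getElem ts .nil, hj]
      have : (j : ℕ) < n := j.2
      simp only [Tm.num_const]
      omega
    · rintro ⟨h1x, h2x⟩
      have hxn : x - 1 < n := by omega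
      refine ⟨ts.getD (idx ⟨x - 1, hxn⟩) .nil, ?_, ?_⟩
      · rw [List.getD_eq_getElem _ _ (hidx _)]
        exact List.getElem_mem _
      · rw [hval ⟨x - 1, hxn⟩]
        simp only [Tm.num_const]
        omega
  · -- no two queens attack each other
    intro a b ha hb hab
    obtain ⟨ja, hja, hjav⟩ := hconst a ha
    obtain ⟨jb, hjb, hjbv⟩ := hconst b hb
    have hqa : (ts.map Tm.num).getD a 0 = (ja : ℕ) + 1 := by
      rw [List.getD_eq_getElem _ _ (by simp; omega)]
      simp only [List.getElem_map]
      rw [← List.getD_eq_getElem ts .nil (by omega), hjav]; rfl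
    have hqb : (ts.map Tm.num).getD b 0 = (jb : ℕ) + 1 := by
      rw [List.getD_eq_getElem _ _ (by simp; omega)]
      simp only [List.getElem_map]
      rw [← List.getD_eq_getElem ts .nil (by omega), hjbv]; rfl
    have hja' : ja ≠ jb := by
      intro h
      subst h
      exact hab (by rw [← hja, hjb])
    have hkma : KthMem (mkOpen ts v) (a + 1) (.const ((ja : ℕ) + 1)) :=
      kthmem_mkOpen.2 ⟨a, by omega, rfl, hjav⟩
    have hkmb : KthMem (mkOpen ts v) (b + 1) (.const ((jb : ℕ) + 1)) :=
      kthmem_mkOpen.2 ⟨b, by omega, rfl, hjbv⟩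
    have hne : (ja : ℕ) + 1 ≠ (jb : ℕ) + 1 := by
      intro h; exact hja' (Fin.ext (by omega))
    obtain ⟨hd1, hd2⟩ := h4 ((ja : ℕ) + 1) ((jb : ℕ) + 1) (a + 1) (b + 1) hkma hkmb hne
    rw [hqa, hqb]
    refine ⟨hne, by omega, ?_⟩
    push_cast at hd2 ⊢
    omega
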